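/- For t ≥ 2 and every non-empty graph G on n vertices with no dominating K_t-model, there is an integer h ≤ t − 1 and an induced subgraph of G on at least (n + h)/2 vertices whose chromatic number is at most h. In particular, the independence number satisfies α(G) ≥ (n + t − 1)/(2t − 2). -/

import Mathlib

/-- A *dominating K_t-model* in a graph G is a sequence (T 0, ..., T (t-1)) of pairwise
disjoint non-empty connected subgraphs of G such that for all i < j, every vertex of T j
has a neighbour (in G) in T i. -/
def SimpleGraph.IsDomKtModel {V : Type*} (G : SimpleGraph V) (t : ℕ) (T : Fin t → Set V) : Prop :=
  (∀ i, (T i).Nonempty) ∧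
  (Pairwise fun i j => Disjoint (T i) (T j)) ∧
  (∀ i, (G.induce (T i)).Connected) ∧
  (∀ i j : Fin t, i < j → ∀ v ∈ T j, ∃ u ∈ T i, G.Adj v u)

/-- G contains a dominating K_t-model. -/
def SimpleGraph.HasDomKtModel {V : Type*} (G : SimpleGraph V) (t : ℕ) : Prop :=
  ∃ T : Fin t → Set V, G.IsDomKtModel t T

section Aux
open Set
set_option linter.unusedSectionVars false
set_option maxRecDepth 4000

variable {V : Type*} [Fintype V] (G : SimpleGraph V)

def MW (t : ℕ) (A : Set V) : Prop :=
  ∃ T : Fin t → Set V, (∀ i, T i ⊆ A) ∧ (∀ i, (T i).Nonempty) ∧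
    (Pairwise fun i j => Disjoint (T i) (T j)) ∧
    (∀ i, (G.induce (T i)).Connected) ∧
    (∀ i j : Fin t, i < j → ∀ v ∈ T j, ∃ u ∈ T i, G.Adj v u)

variable {G}

lemma mw_mono {t : ℕ} {A B : Set V} (hAB : A ⊆ B) (h : MW G t A) : MW G t B := by
  obtain ⟨T, h1, h2, h3, h4, h5⟩ := h
  exact ⟨T, fun i => (h1 i).trans hAB, h2, h3, h4, h5⟩

lemma induce_singleton_connected (u : V) : (G.induce {u}).Connected := by
  rw [SimpleGraph.connected_iff]
  constructor
  · intro a b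
    have : a = b := Subtype.ext (by simpa using a.2.trans b.2.symm)
    exact this ▸ SimpleGraph.Reachable.refl a
  · exact ⟨⟨u, rfl⟩⟩

lemma mw_two_of_edge {A : Set V} {u v : V} (hu : u ∈ A) (hv : v ∈ A) (h : G.Adj u v) :
    MW G 2 A := by
  refine ⟨![{u}, {v}], ?_, ?_, ?_, ?_, ?_⟩
  · intro i; fin_cases i <;> simp [Set.singleton_subset_iff, hu, hv]
  · intro i; fin_cases i <;> simp
  · intro i j hij
    fin_cases i <;> fin_cases j <;> simp_all <;>
      simp [Set.disjoint_singleton, h.ne, h.ne']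
  · intro i; fin_cases i <;> exact induce_singleton_connected _
  · intro i j hij w hw
    fin_cases i <;> fin_cases j <;> simp_all
    exact h.symm

lemma reach_mono {D E : Set V} (hDE : D ⊆ E) {a b : ↥D}
    (h : (G.induce D).Reachable a b) :
    (G.induce E).Reachable ⟨a, hDE a.2⟩ ⟨b, hDE b.2⟩ := by
  exact h.map (⟨fun x => ⟨x, hDE x.2⟩, fun {x y} hxy => hxy⟩ : G.induce D →g G.induce E)

lemma connected_insert {D : Set V} (hD : (G.induce D).Connected) {x d : V}
    (hd : d ∈ D) (hadj : G.Adj x d) : (G.induce (insert x D)).Connected := by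
  rw [SimpleGraph.connected_iff]
  refine ⟨?_, ⟨⟨x, mem_insert _ _⟩⟩⟩
  have hDE : D ⊆ insert x D := subset_insert _ _
  have key : ∀ a : ↥(insert x D), (G.induce (insert x D)).Reachable a ⟨d, hDE hd⟩ := by
    rintro ⟨a, ha⟩
    rcases ha with rfl | ha
    · exact SimpleGraph.Adj.reachable (by exact hadj)
    · exact reach_mono hDE (hD.preconnected ⟨a, ha⟩ ⟨d, hd⟩)
  intro a b
  exact (key a).trans (key b).symm

lemma mw_prepend {t : ℕ} {A D : Set V} (hDA : D ⊆ A) (hDne : D.Nonempty)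
    (hDconn : (G.induce D).Connected)
    (hdom : ∀ v ∈ A \ D, ∃ u ∈ D, G.Adj v u)
    (h : MW G t (A \ D)) : MW G (t + 1) A := by
  obtain ⟨T, h1, h2, h3, h4, h5⟩ := h
  have aux : ∀ k, Disjoint D (T k) := fun k =>
    Set.disjoint_of_subset_right (h1 k) disjoint_sdiff_right
  refine ⟨Fin.cases D T, ?_, ?_, ?_, ?_, ?_⟩
  · intro i
    rcases Fin.eq_zero_or_eq_succ i with rfl | ⟨i', rfl⟩
    · simpa using hDA
    · simpa using (h1 i').trans diff_subset
  · intro i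
    rcases Fin.eq_zero_or_eq_succ i with rfl | ⟨i', rfl⟩ <;> simpa using by
      first | exact hDne | exact h2 _
  · intro i j hij
    rcases Fin.eq_zero_or_eq_succ i with rfl | ⟨i', rfl⟩ <;>
      rcases Fin.eq_zero_or_eq_succ j with rfl | ⟨j', rfl⟩
    · exact absurd rfl hij
    · simpa using aux j'
    · simpa using (aux i').symm
    · simpa using h3 (fun e : i' = j' => hij (by rw [e]))
  · intro i
    rcases Fin.eq_zero_or_eq_succ i with rfl | ⟨i', rfl⟩ <;> simpa using by
      first | exact hDconn | exact h4 _
  · intro i j hij v hv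
    rcases Fin.eq_zero_or_eq_succ i with rfl | ⟨i', rfl⟩ <;>
      rcases Fin.eq_zero_or_eq_succ j with rfl | ⟨j', rfl⟩
    · exact absurd hij (lt_irrefl _)
    · exact hdom v (h1 j' hv)
    · exact absurd hij (by intro hc; simp [Fin.lt_def] at hc)
    · exact h5 i' j' (Fin.succ_lt_succ_iff.mp hij) v hv

lemma walk_find {A D : Set V} :
    ∀ {a b : ↥A} (_ : (G.induce A).Walk a b)
      (_ : ¬ (↑a ∈ D ∨ ∃ u ∈ D, G.Adj ↑a u)) (_ : ↑b ∈ D),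
      ∃ u x : ↥A, ¬ (↑u ∈ D ∨ ∃ w ∈ D, G.Adj ↑u w) ∧ G.Adj ↑u ↑x ∧ ↑x ∉ D ∧
        ∃ d ∈ D, G.Adj ↑x d := by
  intro a b p
  induction p with
  | nil => intro ha hb; exact absurd (Or.inl hb) ha
  | cons h q ih =>
    rename_i u' c' b''
    intro ha hb
    by_cases hc2 : ↑c' ∈ D ∨ ∃ z ∈ D, G.Adj ↑c' z
    · rcases hc2 with hcD | ⟨d, hd, hadj'⟩
      · exact absurd (Or.inr ⟨↑c', hcD, h⟩) ha
      · refine ⟨u', c', ha, h, ?_, d, hd, hadj'⟩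
        intro hbD
        exact ha (Or.inr ⟨↑c', hbD, h⟩)
    · exact ih hc2 hb

lemma exists_dom_pair {A : Set V} (hA : A.Nonempty) (hc : (G.induce A).Connected) :
    ∃ D I : Set V, I ⊆ D ∧ D ⊆ A ∧ I.Nonempty ∧ (G.induce D).Connected ∧
      (∀ v ∈ A, v ∉ D → ∃ u ∈ D, G.Adj v u) ∧
      (∀ u ∈ I, ∀ w ∈ I, u ≠ w → ¬ G.Adj u w) ∧ D.ncard + 1 ≤ 2 * I.ncard := by
  obtain ⟨v0, hv⟩ := hA
  -- iterate
  suffices h : ∀ (k : ℕ) (D I : Set V), I ⊆ D → D ⊆ A → I.Nonempty →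
      (G.induce D).Connected →
      (∀ u ∈ I, ∀ w ∈ I, u ≠ w → ¬ G.Adj u w) → D.ncard + 1 ≤ 2 * I.ncard →
      {v ∈ A | v ∉ D ∧ ∀ u ∈ D, ¬ G.Adj v u}.ncard ≤ k →
      ∃ D' I' : Set V, I' ⊆ D' ∧ D' ⊆ A ∧ I'.Nonempty ∧ (G.induce D').Connected ∧
        (∀ v ∈ A, v ∉ D' → ∃ u ∈ D', G.Adj v u) ∧
        (∀ u ∈ I', ∀ w ∈ I', u ≠ w → ¬ G.Adj u w) ∧ D'.ncard + 1 ≤ 2 * I'.ncard by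
    obtain ⟨D', I', h⟩ := h ({w ∈ A | w ∉ ({v0} : Set V) ∧ ∀ u ∈ ({v0} : Set V), ¬ G.Adj w u}.ncard)
      {v0} {v0} le_rfl (singleton_subset_iff.mpr hv) ⟨v0, rfl⟩
      (induce_singleton_connected v0)
      (by rintro u rfl w rfl hne; exact absurd rfl hne)
      (by simp) le_rfl
    exact ⟨D', I', h⟩
  intro k
  induction k with
  | zero =>
    intro D I hID hDA hIne hDconn hIind hsize hk
    refine ⟨D, I, hID, hDA, hIne, hDconn, ?_, hIind, hsize⟩
    intro w hwA hwD
    by_contra hno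
    push_neg at hno
    have hmem : w ∈ {v ∈ A | v ∉ D ∧ ∀ u ∈ D, ¬ G.Adj v u} := ⟨hwA, hwD, hno⟩
    have hemp : {v ∈ A | v ∉ D ∧ ∀ u ∈ D, ¬ G.Adj v u} = ∅ :=
      (Set.ncard_eq_zero (Set.toFinite _)).mp (Nat.le_zero.mp hk)
    rw [hemp] at hmem
    exact hmem
  | succ k ih =>
    intro D I hID hDA hIne hDconn hIind hsize hk
    by_cases hem : {v ∈ A | v ∉ D ∧ ∀ u ∈ D, ¬ G.Adj v u} = ∅
    · refine ⟨D, I, hID, hDA, hIne, hDconn, ?_, hIind, hsize⟩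
      intro w hwA hwD
      by_contra hno
      push_neg at hno
      have : w ∈ {v ∈ A | v ∉ D ∧ ∀ u ∈ D, ¬ G.Adj v u} := ⟨hwA, hwD, hno⟩
      simp [hem] at this
    · obtain ⟨w, hwA, hwD, hwnadj⟩ := Set.nonempty_iff_ne_empty.mpr hem
      obtain ⟨d, hd⟩ := hIne
      have hdD : d ∈ D := hID hd
      have hreach : (G.induce A).Reachable ⟨w, hwA⟩ ⟨d, hDA hdD⟩ :=
        hc.preconnected _ _
      obtain ⟨p⟩ := hreach
      obtain ⟨u, x, hu, hux, hxD, d', hd', hxd'⟩ :=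
        walk_find (D := D) p (by push_neg; exact ⟨hwD, fun z hz => hwnadj z hz⟩) hdD
      push_neg at hu
      obtain ⟨huD, hunadj⟩ := hu
      -- new sets
      have hxu : (x : V) ≠ u := (hux.symm.ne)
      have hxnotD : (x : V) ∉ D := hxD
      have hunotD : (u : V) ∉ D := huD
      have hDx : (G.induce (insert ↑x D)).Connected := connected_insert hDconn hd' hxd'
      have hDxu : (G.induce (insert ↑u (insert ↑x D))).Connected :=
        connected_insert hDx (mem_insert _ _) hux
      have huI : (u : V) ∉ I := fun h => huD (hID h)
      have hxiD : (x:V) ∉ insert (↑u) D := by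
        rintro (h | h); exact hxu h; exact hxnotD h
      have huixD : (u : V) ∉ insert (↑x) D := by
        rintro (h | h); exact hxu h.symm; exact hunotD h
      refine ih (insert ↑u (insert ↑x D)) (insert ↑u I) ?_ ?_ ⟨u, mem_insert _ _⟩ hDxu ?_ ?_ ?_
      · exact insert_subset_insert (hID.trans (subset_insert _ _))
      · exact insert_subset u.2 (insert_subset x.2 hDA)
      · -- independence
        intro a ha b hb hab
        rcases ha with rfl | ha <;> rcases hb with rfl | hb
        · exact absurd rfl hab
        · exact hunadj b (hID hb)
        · intro hadj; exact hunadj a (hID ha) hadj.symm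
        · exact hIind a ha b hb hab
      · -- size
        rw [Set.ncard_insert_of_notMem huixD (by
            exact (Set.toFinite _)), Set.ncard_insert_of_notMem hxnotD (Set.toFinite _),
          Set.ncard_insert_of_notMem huI (Set.toFinite _)]
        omega
      · -- measure decreases
        have hsub : {v ∈ A | v ∉ insert (↑u) (insert (↑x) D) ∧
            ∀ z ∈ insert (↑u) (insert (↑x) D), ¬ G.Adj v z} ⊆
            {v ∈ A | v ∉ D ∧ ∀ z ∈ D, ¬ G.Adj v z} := by
          rintro y ⟨hyA, hyD, hyadj⟩
          exact ⟨hyA, fun h => hyD (mem_insert_of_mem _ (mem_insert_of_mem _ h)),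
            fun z hz => hyadj z (mem_insert_of_mem _ (mem_insert_of_mem _ hz))⟩
        have hmem : (u : V) ∈ {v ∈ A | v ∉ D ∧ ∀ z ∈ D, ¬ G.Adj v z} :=
          ⟨u.2, hunotD, hunadj⟩
        have hnmem : (u : V) ∉ {v ∈ A | v ∉ insert (↑u) (insert (↑x) D) ∧
            ∀ z ∈ insert (↑u) (insert (↑x) D), ¬ G.Adj v z} := by
          rintro ⟨_, hyD, _⟩
          exact hyD (mem_insert _ _)
        have : {v ∈ A | v ∉ insert (↑u) (insert (↑x) D) ∧
            ∀ z ∈ insert (↑u) (insert (↑x) D), ¬ G.Adj v z} ⊂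
            {v ∈ A | v ∉ D ∧ ∀ z ∈ D, ¬ G.Adj v z} :=
          ⟨hsub, fun hsup => hnmem (hsup hmem)⟩
        have := Set.ncard_lt_ncard this (Set.toFinite _)
        omega

lemma colorable_one_of_indep {I : Set V} (hI : ∀ u ∈ I, ∀ w ∈ I, u ≠ w → ¬ G.Adj u w) :
    (G.induce I).Colorable 1 := by
  refine ⟨⟨fun _ => 0, ?_⟩⟩
  intro a b hab
  exact absurd hab (hI a a.2 b b.2 (fun e => (hab.ne (Subtype.ext e))) : ¬ G.Adj ↑a ↑b).elim

lemma colorable_union {s₁ s₂ : Set V} {m : ℕ} (h₁ : (G.induce s₁).Colorable m)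
    (h₂ : (G.induce s₂).Colorable m)
    (hx : ∀ u ∈ s₁, ∀ w ∈ s₂, w ∉ s₁ → ¬ G.Adj u w) :
    (G.induce (s₁ ∪ s₂)).Colorable m := by
  classical
  obtain ⟨C₁⟩ := h₁
  obtain ⟨C₂⟩ := h₂
  refine ⟨⟨fun v => if h : ↑v ∈ s₁ then C₁ ⟨v, h⟩ else
    C₂ ⟨v, v.2.resolve_left h⟩, ?_⟩⟩
  rintro ⟨a, ha⟩ ⟨b, hb⟩ hab heq
  have hadj : G.Adj a b := hab
  by_cases h1 : a ∈ s₁ <;> by_cases h2 : b ∈ s₁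
  · simp only [h1, h2, dif_pos] at heq
    exact C₁.valid (show (G.induce s₁).Adj ⟨a, h1⟩ ⟨b, h2⟩ from hadj) heq
  · exact hx a h1 b (hb.resolve_left h2) h2 hadj
  · exact hx b h2 a (ha.resolve_left h1) h1 hadj.symm
  · simp only [h1, h2, dif_neg, not_false_iff] at heq
    exact C₂.valid (show (G.induce s₂).Adj ⟨a, ha.resolve_left h1⟩ ⟨b, hb.resolve_left h2⟩ from hadj) heq

lemma colorable_union_indep {s₁ I : Set V} {m : ℕ} (h₁ : (G.induce s₁).Colorable m)
    (hI : ∀ u ∈ I, ∀ w ∈ I, u ≠ w → ¬ G.Adj u w) :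
    (G.induce (s₁ ∪ I)).Colorable (m + 1) := by
  classical
  obtain ⟨C₁⟩ := h₁
  refine ⟨⟨fun v => if h : ↑v ∈ s₁ then (C₁ ⟨v, h⟩).castSucc else Fin.last m, ?_⟩⟩
  rintro ⟨a, ha⟩ ⟨b, hb⟩ hab heq
  have hadj : G.Adj a b := hab
  by_cases h1 : a ∈ s₁ <;> by_cases h2 : b ∈ s₁
  · simp only [h1, h2, dif_pos] at heq
    exact C₁.valid (show (G.induce s₁).Adj ⟨a, h1⟩ ⟨b, h2⟩ from hadj) (Fin.castSucc_injective _ heq)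
  · simp only [h1, h2, dif_pos, dif_neg, not_false_iff] at heq
    exact (Fin.castSucc_lt_last _).ne heq
  · simp only [h1, h2, dif_pos, dif_neg, not_false_iff] at heq
    exact (Fin.castSucc_lt_last _).ne heq.symm
  · exact hI a (ha.resolve_left h1) b (hb.resolve_left h2) hadj.ne hadj

lemma main_lemma (n : ℕ) : ∀ A : Set V, A.ncard ≤ n → A.Nonempty → ∀ t : ℕ, 2 ≤ t →
    ¬ MW G t A →
    ∃ (h' : ℕ) (s : Set V), 1 ≤ h' ∧ h' + 1 ≤ t ∧ s ⊆ A ∧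
      ((A.ncard : ℝ) + h') / 2 ≤ s.ncard ∧ (G.induce s).Colorable h' := by
  induction n with
  | zero =>
    intro A hcard hA t _ _
    have := hA.ncard_pos (Set.toFinite _)
    omega
  | succ n IH =>
    intro A hcard hA t ht hMW
    by_cases hedge : ∀ u ∈ A, ∀ w ∈ A, ¬ G.Adj u w
    · refine ⟨1, A, le_rfl, by omega, subset_rfl, ?_, ?_⟩
      · have h1 : 1 ≤ A.ncard := hA.ncard_pos (Set.toFinite _)
        have : (1 : ℝ) ≤ (A.ncard : ℝ) := by exact_mod_cast h1
        linarith
      · exact colorable_one_of_indep (fun u hu w hw _ => hedge u hu w hw)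
    · push_neg at hedge
      obtain ⟨u, hu, w, hw, hadj⟩ := hedge
      have ht3 : 3 ≤ t := by
        by_contra hlt
        have : t = 2 := by omega
        subst this
        exact hMW (mw_two_of_edge hu hw hadj)
      by_cases hconn : (G.induce A).Connected
      · obtain ⟨D, I, hID, hDA, hIne, hDconn, hdom, hIind, hsize⟩ :=
          exists_dom_pair hA hconn
        by_cases hAD : (A \ D).Nonempty
        · have hDne : D.Nonempty := hIne.mono hID
          have hssub : A \ D ⊂ A := by
            obtain ⟨d, hd⟩ := hDne
            exact ⟨diff_subset, fun hsup =>
              (hsup (hDA hd)).2 hd⟩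
          have hlt : (A \ D).ncard < A.ncard := Set.ncard_lt_ncard hssub (Set.toFinite _)
          have hMW' : ¬ MW G (t - 1) (A \ D) := by
            intro hm
            have := mw_prepend hDA hDne hDconn (fun v hv => hdom v hv.1 hv.2) hm
            rw [Nat.sub_add_cancel (by omega)] at this
            exact hMW this
          obtain ⟨h'', s', h1'', ht'', hs'A, hsize', hcol'⟩ :=
            IH (A \ D) (by omega) hAD (t - 1) (by omega) hMW'
          refine ⟨h'' + 1, s' ∪ I, by omega, by omega,
            union_subset (hs'A.trans diff_subset) (hID.trans hDA), ?_, ?_⟩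
          · have hdisj : Disjoint s' I :=
              Set.disjoint_of_subset hs'A hID disjoint_sdiff_left
            rw [Set.ncard_union_eq hdisj (Set.toFinite _) (Set.toFinite _)]
            have hADD : (A \ D).ncard + D.ncard = A.ncard :=
              Set.ncard_diff_add_ncard_of_subset hDA (Set.toFinite _)
            have c1 : ((A \ D).ncard : ℝ) + D.ncard = A.ncard := by exact_mod_cast hADD
            have c2 : (D.ncard : ℝ) + 1 ≤ 2 * I.ncard := by exact_mod_cast hsize
            push_cast
            linarith
          · exact colorable_union_indep hcol' hIind
        · -- D = A
          have hDA' : A ⊆ D := by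
            intro x hx
            by_contra hxD
            exact hAD ⟨x, hx, hxD⟩
          have hDeq : D = A := Subset.antisymm hDA hDA'
          refine ⟨1, I, le_rfl, by omega, hID.trans hDA, ?_, colorable_one_of_indep hIind⟩
          have c2 : (D.ncard : ℝ) + 1 ≤ 2 * I.ncard := by exact_mod_cast hsize
          rw [hDeq] at c2
          push_cast
          linarith
      · -- disconnected
        rw [SimpleGraph.connected_iff] at hconn
        push_neg at hconn
        have hnel : Nonempty ↥A := hA.to_subtype
        have hpre : ¬ (G.induce A).Preconnected := fun h => not_nonempty_iff.mpr (hconn h) hnel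
        rw [SimpleGraph.Preconnected] at hpre
        push_neg at hpre
        obtain ⟨a, b, hab⟩ := hpre
        set B : Set V := {x | ∃ hx : x ∈ A, (G.induce A).Reachable a ⟨x, hx⟩} with hBdef
        have hBA : B ⊆ A := fun x hx => hx.1
        have haB : (a : V) ∈ B := ⟨a.2, by exact SimpleGraph.Reachable.refl _⟩
        have hbC : (b : V) ∈ A \ B := by
          refine ⟨b.2, fun hbB => ?_⟩
          obtain ⟨hb', hr⟩ := hbB
          exact hab (by convert hr using 2)
        have hCA : A \ B ⊆ A := diff_subset
        have hBne : B.Nonempty := ⟨a, haB⟩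
        have hCne : (A \ B).Nonempty := ⟨b, hbC⟩
        have hcross : ∀ x ∈ B, ∀ y ∈ A \ B, ¬ G.Adj x y := by
          rintro x ⟨hxA, hr⟩ y ⟨hyA, hyB⟩ hxy
          exact hyB ⟨hyA, hr.trans (SimpleGraph.Adj.reachable (by exact hxy))⟩
        have hBlt : B.ncard < A.ncard :=
          Set.ncard_lt_ncard ⟨hBA, fun hsup => hbC.2 (hsup hbC.1)⟩ (Set.toFinite _)
        have hClt : (A \ B).ncard < A.ncard :=
          Set.ncard_lt_ncard ⟨hCA, fun hsup => (hsup a.2).2 haB⟩ (Set.toFinite _)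
        obtain ⟨h₁, s₁, h11, h1t, hs1, hsz1, hcol1⟩ :=
          IH B (by omega) hBne t ht (fun hm => hMW (mw_mono hBA hm))
        obtain ⟨h₂, s₂, h21, h2t, hs2, hsz2, hcol2⟩ :=
          IH (A \ B) (by omega) hCne t ht (fun hm => hMW (mw_mono hCA hm))
        refine ⟨max h₁ h₂, s₁ ∪ s₂, le_trans h11 (le_max_left _ _), ?_,
          union_subset (hs1.trans hBA) (hs2.trans hCA), ?_, ?_⟩
        · rcases max_cases h₁ h₂ with ⟨he, _⟩ | ⟨he, _⟩ <;> omega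
        · have hdisj : Disjoint s₁ s₂ :=
            Set.disjoint_of_subset hs1 hs2 disjoint_sdiff_right
          rw [Set.ncard_union_eq hdisj (Set.toFinite _) (Set.toFinite _)]
          have hBC : (A \ B).ncard + B.ncard = A.ncard :=
            Set.ncard_diff_add_ncard_of_subset hBA (Set.toFinite _)
          have c1 : ((A \ B).ncard : ℝ) + B.ncard = A.ncard := by exact_mod_cast hBC
          have hmax : max h₁ h₂ + 1 ≤ h₁ + h₂ := by
            rcases max_cases h₁ h₂ with ⟨he, _⟩ | ⟨he, _⟩ <;> omega
          have c3 : ((max h₁ h₂ : ℕ) : ℝ) + 1 ≤ (h₁ : ℝ) + h₂ := by exact_mod_cast hmax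
          push_cast at c3 ⊢
          linarith
        · exact colorable_union (hcol1.mono (le_max_left _ _)) (hcol2.mono (le_max_right _ _))
            (fun x hx y hy _ => hcross x (hs1 hx) y (hs2 hy))


end Aux

/-- For t ≥ 2 and every non-empty n-vertex graph G with no dominating K_t-model, there is an
integer h ≤ t - 1 and an induced subgraph of G on at least (n + h)/2 vertices with chromatic
number at most h.  In particular α(G) ≥ (n + t - 1)/(2t - 2). -/


theorem big_colourable_induced_subgraph_of_not_hasDomKtModel {V : Type*} [Fintype V]
    [Nonempty V] (G : SimpleGraph V) (t : ℕ) (ht : 2 ≤ t) (h : ¬ G.HasDomKtModel t) :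
    (∃ h' : ℕ, h' ≤ t - 1 ∧ ∃ s : Set V,
      ((Fintype.card V : ℝ) + h') / 2 ≤ s.ncard ∧
      (G.induce s).chromaticNumber ≤ (h' : ℕ∞)) ∧
    ∃ I : Set V, (∀ u ∈ I, ∀ w ∈ I, u ≠ w → ¬ G.Adj u w) ∧
      ((Fintype.card V : ℝ) + t - 1) / (2 * t - 2) ≤ I.ncard := by
  classical
  have hMW : ¬ MW G t Set.univ := by
    rintro ⟨T, _, h2, h3, h4, h5⟩
    exact h ⟨T, h2, h3, h4, h5⟩
  have hcardA : (Set.univ : Set V).ncard = Fintype.card V := by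
    rw [Set.ncard_univ, Nat.card_eq_fintype_card]
  obtain ⟨h', s, hh1, hht, _, hsize, hcol⟩ :=
    main_lemma (Fintype.card V) Set.univ (le_of_eq hcardA) Set.univ_nonempty t ht hMW
  rw [hcardA] at hsize
  refine ⟨⟨h', by omega, s, hsize, hcol.chromaticNumber_le⟩, ?_⟩
  obtain ⟨C⟩ := hcol
  letI : Fintype ↥s := s.toFinite.fintype
  haveI : Nonempty (Fin h') := ⟨⟨0, by omega⟩⟩
  -- pigeonhole
  obtain ⟨c₀, _, hc₀⟩ := Finset.exists_max_image (Finset.univ : Finset (Fin h'))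
    (fun c => (Finset.univ.filter (fun x : ↥s => C x = c)).card) Finset.univ_nonempty
  have hsum : Fintype.card ↥s =
      ∑ c : Fin h', (Finset.univ.filter (fun x : ↥s => C x = c)).card := by
    rw [← Finset.card_univ]
    exact Finset.card_eq_sum_card_fiberwise (fun x _ => Finset.mem_univ (C x))
  have hbound : Fintype.card ↥s ≤ h' * (Finset.univ.filter (fun x : ↥s => C x = c₀)).card := by
    rw [hsum]
    calc ∑ c : Fin h', (Finset.univ.filter (fun x : ↥s => C x = c)).card
        ≤ ∑ _c : Fin h', (Finset.univ.filter (fun x : ↥s => C x = c₀)).card :=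
          Finset.sum_le_sum (fun c _ => hc₀ c (Finset.mem_univ c))
      _ = h' * (Finset.univ.filter (fun x : ↥s => C x = c₀)).card := by
          rw [Finset.sum_const, Finset.card_univ, Fintype.card_fin, smul_eq_mul]
  set I : Set V := Subtype.val '' {x : ↥s | C x = c₀} with hIdef
  have hIcard : I.ncard = (Finset.univ.filter (fun x : ↥s => C x = c₀)).card := by
    rw [hIdef, Set.ncard_image_of_injective _ Subtype.coe_injective,
      Set.ncard_eq_toFinset_card', Set.toFinset_setOf]
  have hscard : s.ncard = Fintype.card ↥s := by
    rw [Set.ncard_eq_toFinset_card', Set.toFinset_card]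
  refine ⟨I, ?_, ?_⟩
  · rintro u ⟨x, hx, rfl⟩ w ⟨y, hy, rfl⟩ hne hadj
    have hxy : (G.induce s).Adj x y := hadj
    exact C.valid hxy (hx.trans hy.symm)
  · have hnat : s.ncard ≤ h' * I.ncard := by rw [hIcard, hscard]; exact hbound
    have cs : (s.ncard : ℝ) ≤ (h' : ℝ) * I.ncard := by exact_mod_cast hnat
    have hh1' : (1 : ℝ) ≤ (h' : ℝ) := by exact_mod_cast hh1
    have hht' : (h' : ℝ) + 1 ≤ (t : ℝ) := by exact_mod_cast hht
    set n : ℝ := (Fintype.card V : ℝ) with hn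
    have hn0 : 0 ≤ n := by positivity
    set x : ℝ := (I.ncard : ℝ) with hx
    have cs2 : n + (h' : ℝ) ≤ 2 * (h' : ℝ) * x := by
      have : n + (h' : ℝ) ≤ 2 * (s.ncard : ℝ) := by linarith [hsize]
      linarith [cs]
    have hxhalf : (1 : ℝ) ≤ 2 * x := by
      have h1 : (h' : ℝ) * 1 ≤ (h' : ℝ) * (2 * x) := by nlinarith
      have := le_of_mul_le_mul_left h1 (by linarith : (0:ℝ) < (h' : ℝ))
      linarith
    have hprod : 0 ≤ ((t : ℝ) - 1 - (h' : ℝ)) * (2 * x - 1) :=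
      mul_nonneg (by linarith) (by linarith)
    rw [div_le_iff₀ (by linarith : (0:ℝ) < 2 * (t : ℝ) - 2)]
    nlinarith [hprod, cs2]
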